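/- Let 0 < a < b and k ∈ ℝ. Viewing the square hyperbola S_k(aI, bI) as a subset of ℂ via the inclusion of the upper half-plane in ℂ, the intersection of its closure in ℂ with the real axis equals {−√(ab), √(ab)}. In other words, the ideal endpoints of every square hyperbola S_k(aI,bI) coincide with those of the equidistant line S_0(aI,bI). -/

import Mathlib

open UpperHalfPlane

noncomputable section

/-- The point of the upper half-plane with complex coordinate `a·i`, for `a > 0`. -/
def ptI (a : ℝ) (ha : 0 < a) : UpperHalfPlane := ⟨a * Complex.I, by simpa using ha⟩

namespace SqHyp

lemma ptI_coe (c : ℝ) (hc : 0 < c) : ((ptI c hc : UpperHalfPlane) : ℂ) = c * Complex.I := rfl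

lemma ptI_im (c : ℝ) (hc : 0 < c) : (ptI c hc).im = c := by
  simp [UpperHalfPlane.im, ptI]

/-- Numerator function. -/
def NN (c : ℝ) (z : ℂ) : ℝ :=
  ‖z - c * Complex.I‖ + Real.sqrt (‖z - c * Complex.I‖ ^ 2 + 4 * c * z.im)

/-- The quotient whose log is the difference of distances. -/
def QQ (a b : ℝ) (z : ℂ) : ℝ := (b * NN a z ^ 2) / (a * NN b z ^ 2)

lemma NN_pos {c : ℝ} (hc : 0 < c) (z : ℂ) : 0 < NN c z := by
  rcases eq_or_ne z (c * Complex.I) with h | h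
  · have : ‖z - c * Complex.I‖ = 0 := by simp [h]
    rw [NN, this, h]
    have : (0:ℝ) < Real.sqrt (0 ^ 2 + 4 * c * (c * Complex.I).im) := by
      rw [Real.sqrt_pos]
      simp
      positivity
    linarith
  · have h1 : 0 < ‖z - c * Complex.I‖ := by
      simpa [sub_eq_zero] using h
    have h2 : 0 ≤ Real.sqrt (‖z - c * Complex.I‖ ^ 2 + 4 * c * z.im) :=
      Real.sqrt_nonneg _
    rw [NN]; linarith

lemma NN_continuous (c : ℝ) : Continuous (NN c) := by
  apply Continuous.add
  · exact (continuous_norm.comp (continuous_id.sub continuous_const))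
  · apply Real.continuous_sqrt.comp
    apply Continuous.add
    · exact ((continuous_norm.comp (continuous_id.sub continuous_const)).pow 2)
    · exact continuous_const.mul Complex.continuous_im

lemma QQ_pos {a b : ℝ} (ha : 0 < a) (hb : 0 < b) (z : ℂ) : 0 < QQ a b z := by
  have := NN_pos ha z
  have := NN_pos hb z
  rw [QQ]; positivity

lemma QQ_continuous {a b : ℝ} (ha : 0 < a) (hb : 0 < b) : Continuous (QQ a b) := by
  apply Continuous.div
  · exact continuous_const.mul ((NN_continuous a).pow 2)
  · exact continuous_const.mul ((NN_continuous b).pow 2)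
  · intro z
    have := NN_pos hb z
    positivity

/-- Value of QQ at a real point. -/
lemma NN_real (c : ℝ) (hc : 0 < c) (t : ℝ) :
    NN c (t : ℂ) = 2 * Real.sqrt (t ^ 2 + c ^ 2) := by
  have habs : ‖(t:ℂ) - c * Complex.I‖ = Real.sqrt (t ^ 2 + c ^ 2) := by
    rw [Complex.norm_def, Complex.normSq_apply]
    congr 1 <;> simp <;> ring_nf
  have hsq : (Real.sqrt (t ^ 2 + c ^ 2)) ^ 2 = t ^ 2 + c ^ 2 :=
    Real.sq_sqrt (by positivity)
  rw [NN, habs]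
  simp [hsq]
  ring

lemma QQ_real {a b : ℝ} (ha : 0 < a) (hb : 0 < b) (t : ℝ) :
    QQ a b (t : ℂ) = (b * (t ^ 2 + a ^ 2)) / (a * (t ^ 2 + b ^ 2)) := by
  rw [QQ, NN_real a ha, NN_real b hb]
  rw [mul_pow, mul_pow, Real.sq_sqrt (by positivity), Real.sq_sqrt (by positivity)]
  have h1 : a * (t ^ 2 + b ^ 2) ≠ 0 := by positivity
  field_simp

/-- Distance to `ptI c` in log form. -/
lemma dist_ptI_eq {c : ℝ} (hc : 0 < c) (x : UpperHalfPlane) :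
    dist x (ptI c hc) =
      2 * Real.log (NN c (x : ℂ) / (2 * Real.sqrt (c * x.im))) := by
  have hy : 0 < x.im := x.im_pos
  set r : ℝ := ‖(x : ℂ) - c * Complex.I‖ with hr
  have hr0 : 0 ≤ r := norm_nonneg _
  set s : ℝ := Real.sqrt (c * x.im) with hs
  have hs0 : 0 < s := Real.sqrt_pos.2 (by positivity)
  have hs2 : s ^ 2 = c * x.im := Real.sq_sqrt (by positivity)
  have hdc : dist ((x : ℂ)) ((ptI c hc : UpperHalfPlane) : ℂ) = r := by
    rw [ptI_coe, Complex.dist_eq]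
  rw [UpperHalfPlane.dist_eq, hdc, ptI_im]
  have him : Real.sqrt (x.im * c) = s := by rw [hs, mul_comm]
  rw [him]
  congr 1
  set p : ℝ := r / (2 * s) with hp
  have hp0 : 0 ≤ p := by positivity
  have hsp : 2 * s * p = r := by rw [hp]; field_simp
  have hkey : Real.sqrt (1 + p ^ 2) = Real.sqrt (r ^ 2 + 4 * (c * x.im)) / (2 * s) := by
    have h2s : (2 * s) ^ 2 = 4 * (c * x.im) := by rw [mul_pow, hs2]; ring
    have hexp : r ^ 2 + 4 * (c * x.im) = (2 * s) ^ 2 * (1 + p ^ 2) := by nlinarith [hsp, h2s]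
    rw [hexp, Real.sqrt_mul (by positivity) _, Real.sqrt_sq (by positivity),
      mul_div_cancel_left₀ _ (by positivity : (0:ℝ) < 2 * s).ne']
  have harsinh : Real.arsinh p = Real.log (p + Real.sqrt (1 + p ^ 2)) := by
    rw [← Real.exp_arsinh, Real.log_exp]
  rw [harsinh, hkey]
  congr 1
  rw [NN, ← hr]
  have : r ^ 2 + 4 * c * (x : ℂ).im = r ^ 2 + 4 * (c * x.im) := by
    rw [UpperHalfPlane.coe_im]; ring
  rw [this, hp]
  field_simp

/-- The difference of squared-distance formula. -/
lemma dist_sub_dist {a b : ℝ} (ha : 0 < a) (hb : 0 < b) (x : UpperHalfPlane) :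
    dist x (ptI a ha) - dist x (ptI b hb) = Real.log (QQ a b (x : ℂ)) := by
  have hy : 0 < x.im := x.im_pos
  have hNa := NN_pos ha (x : ℂ)
  have hNb := NN_pos hb (x : ℂ)
  rw [dist_ptI_eq ha, dist_ptI_eq hb, QQ]
  have hsa : (0:ℝ) < Real.sqrt (a * x.im) := Real.sqrt_pos.2 (by positivity)
  have hsb : (0:ℝ) < Real.sqrt (b * x.im) := Real.sqrt_pos.2 (by positivity)
  rw [Real.log_div (by positivity) (by positivity),
      Real.log_div (by positivity) (by positivity),
      Real.log_div (by positivity) (by positivity),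
      Real.log_mul (by positivity) (by positivity),
      Real.log_mul (by positivity) (by positivity),
      Real.log_mul (by positivity) (by positivity),
      Real.log_mul (by positivity) (by positivity),
      Real.log_pow, Real.log_pow,
      Real.log_sqrt (by positivity), Real.log_sqrt (by positivity),
      Real.log_mul (ne_of_gt ha) (ne_of_gt hy),
      Real.log_mul (ne_of_gt hb) (ne_of_gt hy)]
  push_cast
  ring


/-- Distance function to `c·i` as a function on `ℂ`. -/
def dA (c : ℝ) (z : ℂ) : ℝ :=
  2 * Real.arsinh (‖z - c * Complex.I‖ / (2 * Real.sqrt (c * z.im)))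

lemma dist_eq_dA {c : ℝ} (hc : 0 < c) (x : UpperHalfPlane) :
    dist x (ptI c hc) = dA c (x : ℂ) := by
  rw [UpperHalfPlane.dist_eq, dA, UpperHalfPlane.coe_im, ptI_im, mul_comm x.im c]
  have hd : dist ((x : ℂ)) ((ptI c hc : UpperHalfPlane) : ℂ)
      = ‖(x : ℂ) - c * Complex.I‖ := by
    rw [ptI_coe, Complex.dist_eq]
  rw [hd]

/-- The squared-distance difference function, as a function on `ℂ`. -/
def FF (a b : ℝ) (z : ℂ) : ℝ := Real.log (QQ a b z) * (dA a z + dA b z)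

lemma FF_eq {a b : ℝ} (ha : 0 < a) (hb : 0 < b) (x : UpperHalfPlane) :
    dist x (ptI a ha) ^ 2 - dist x (ptI b hb) ^ 2 = FF a b (x : ℂ) := by
  have h1 := dist_sub_dist ha hb x
  have key : dist x (ptI a ha) ^ 2 - dist x (ptI b hb) ^ 2
      = (dist x (ptI a ha) - dist x (ptI b hb)) * (dist x (ptI a ha) + dist x (ptI b hb)) := by
    ring
  rw [key, h1, dist_eq_dA ha, dist_eq_dA hb, FF]

lemma le_dist {c : ℝ} (hc : 0 < c) (x : UpperHalfPlane) (M : ℝ)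
    (h : Real.sinh (M / 2) * (2 * Real.sqrt (c * x.im))
      ≤ ‖(x : ℂ) - c * Complex.I‖) :
    M ≤ dist x (ptI c hc) := by
  rw [dist_eq_dA hc, dA, UpperHalfPlane.coe_im]
  have hs : (0:ℝ) < 2 * Real.sqrt (c * x.im) := by
    have : (0:ℝ) < Real.sqrt (c * x.im) := Real.sqrt_pos.2 (by positivity)
    linarith
  have hM : M = 2 * Real.arsinh (Real.sinh (M / 2)) := by rw [Real.arsinh_sinh]; ring
  nth_rewrite 1 [hM]
  have : Real.sinh (M / 2) ≤ ‖(x : ℂ) - c * Complex.I‖ / (2 * Real.sqrt (c * x.im)) :=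
    (le_div_iff₀ hs).2 h
  have := Real.arsinh_le_arsinh.2 this
  linarith

open Filter Topology in
lemma dA_tendsto {c u : ℝ} (hc : 0 < c) (hu : u ≠ 0) :
    Tendsto (fun h : ℝ => dA c ((u : ℂ) + h * Complex.I)) (𝓝[>] 0) atTop := by
  have harsinh_top : Tendsto Real.arsinh atTop atTop :=
    Monotone.tendsto_atTop_atTop (fun x y hxy => Real.arsinh_le_arsinh.2 hxy)
      (fun b' => ⟨Real.sinh b', (Real.arsinh_sinh b').ge⟩)
  have hsqrt : Tendsto (fun h : ℝ => Real.sqrt (c * h)) (𝓝[>] 0) (𝓝[>] 0) := by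
    rw [tendsto_nhdsWithin_iff]
    constructor
    · have hcont : Continuous fun h : ℝ => Real.sqrt (c * h) := by
        exact Real.continuous_sqrt.comp (continuous_const.mul continuous_id)
      have := (hcont.tendsto 0).mono_left (nhdsWithin_le_nhds : 𝓝[>] (0:ℝ) ≤ 𝓝 0)
      simpa using this
    · filter_upwards [self_mem_nhdsWithin] with h hh
      exact Real.sqrt_pos.2 (mul_pos hc hh)
  have hinv : Tendsto (fun h : ℝ => (Real.sqrt (c * h))⁻¹) (𝓝[>] 0) atTop :=
    tendsto_inv_nhdsGT_zero.comp hsqrt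
  have hu2 : (0:ℝ) < |u| / 2 := by
    have := abs_pos.2 hu; linarith
  have hlow : Tendsto (fun h : ℝ => 2 * Real.arsinh (|u| / 2 * (Real.sqrt (c * h))⁻¹))
      (𝓝[>] 0) atTop := by
    apply Tendsto.const_mul_atTop two_pos
    exact harsinh_top.comp (hinv.const_mul_atTop hu2)
  apply tendsto_atTop_mono' _ _ hlow
  filter_upwards [self_mem_nhdsWithin] with h hh
  have hh0 : (0:ℝ) < h := hh
  have hre : ((u : ℂ) + h * Complex.I - c * Complex.I).re = u := by simp
  have habs : |u| ≤ ‖(u : ℂ) + h * Complex.I - c * Complex.I‖ := by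
    calc |u| = |((u : ℂ) + h * Complex.I - c * Complex.I).re| := by rw [hre]
    _ ≤ _ := Complex.abs_re_le_norm _
  have hs : (0:ℝ) < Real.sqrt (c * h) := Real.sqrt_pos.2 (by positivity)
  have heq : |u| / 2 * (Real.sqrt (c * h))⁻¹
      = |u| / (2 * Real.sqrt (c * h)) := by ring
  rw [dA]
  have him : ((u : ℂ) + h * Complex.I).im = h := by simp
  rw [him, heq]
  have hle : |u| / (2 * Real.sqrt (c * h))
      ≤ ‖(u : ℂ) + h * Complex.I - c * Complex.I‖ / (2 * Real.sqrt (c * h)) := by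
    gcongr
  have := Real.arsinh_le_arsinh.2 hle
  linarith

open Filter Topology in
lemma path_tendsto (u : ℝ) :
    Tendsto (fun h : ℝ => (u : ℂ) + h * Complex.I) (𝓝[>] 0) (𝓝 (u : ℂ)) := by
  have hcont : Continuous fun h : ℝ => (u : ℂ) + h * Complex.I := by
    exact continuous_const.add ((Complex.continuous_ofReal.mul continuous_const))
  have := (hcont.tendsto 0).mono_left (nhdsWithin_le_nhds : 𝓝[>] (0:ℝ) ≤ 𝓝 0)
  simpa using this

open Filter Topology in
lemma FF_tendsto_atTop {a b u : ℝ} (ha : 0 < a) (hb : 0 < b) (hu : u ≠ 0)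
    (hQ : 1 < QQ a b (u : ℂ)) :
    Tendsto (fun h : ℝ => FF a b ((u : ℂ) + h * Complex.I)) (𝓝[>] 0) atTop := by
  simp only [FF]
  apply Filter.Tendsto.pos_mul_atTop (Real.log_pos hQ)
  · have hc : ContinuousAt (fun z : ℂ => Real.log (QQ a b z)) (u : ℂ) :=
      (Real.continuousAt_log (QQ_pos ha hb _).ne').comp (QQ_continuous ha hb).continuousAt
    exact hc.tendsto.comp (path_tendsto u)
  · exact Filter.Tendsto.atTop_add_atTop (dA_tendsto ha hu) (dA_tendsto hb hu)

open Filter Topology in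
lemma FF_tendsto_atBot {a b u : ℝ} (ha : 0 < a) (hb : 0 < b) (hu : u ≠ 0)
    (hQ : QQ a b (u : ℂ) < 1) :
    Tendsto (fun h : ℝ => FF a b ((u : ℂ) + h * Complex.I)) (𝓝[>] 0) atBot := by
  simp only [FF]
  apply Filter.Tendsto.neg_mul_atTop (Real.log_neg (QQ_pos ha hb _) hQ)
  · have hc : ContinuousAt (fun z : ℂ => Real.log (QQ a b z)) (u : ℂ) :=
      (Real.continuousAt_log (QQ_pos ha hb _).ne').comp (QQ_continuous ha hb).continuousAt
    exact hc.tendsto.comp (path_tendsto u)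
  · exact Filter.Tendsto.atTop_add_atTop (dA_tendsto ha hu) (dA_tendsto hb hu)


open Filter Topology in
lemma not_mem_closure {a b : ℝ} (ha : 0 < a) (hb : 0 < b) (k t : ℝ)
    (ht : a * (t ^ 2 + b ^ 2) < b * (t ^ 2 + a ^ 2)) :
    (t : ℂ) ∉ closure ((fun x : UpperHalfPlane => (x : ℂ)) ''
      {x : UpperHalfPlane | dist x (ptI a ha) ^ 2 - dist x (ptI b hb) ^ 2 = k}) := by
  intro hmem
  have hQt : 1 < QQ a b (t : ℂ) := by
    rw [QQ_real ha hb, lt_div_iff₀ (by positivity)]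
    linarith
  set κ : ℝ := (1 + QQ a b (t : ℂ)) / 2 with hκdef
  have hκ1 : 1 < κ := by rw [hκdef]; linarith
  have hκQ : κ < QQ a b (t : ℂ) := by rw [hκdef]; linarith
  obtain ⟨ρ₁, hρ₁, hball⟩ := Metric.continuousAt_iff.1 (QQ_continuous ha hb).continuousAt
    (QQ a b (t : ℂ) - κ) (by linarith)
  set m : ℝ := Real.log κ with hmdef
  have hm : 0 < m := Real.log_pos hκ1
  set M : ℝ := (|k| + 1) / m with hMdef
  have hM : 0 < M := by positivity
  set C : ℝ := max (Real.sinh (M / 2)) 1 with hCdef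
  have hC1 : (1:ℝ) ≤ C := le_max_right _ _
  have hC : (0:ℝ) < C := lt_of_lt_of_le one_pos hC1
  have hsC : Real.sinh (M / 2) ≤ C := le_max_left _ _
  set y₀ : ℝ := a / (16 * C ^ 2) with hy₀def
  have hy₀ : 0 < y₀ := by positivity
  set ρ : ℝ := min ρ₁ (min (a / 2) y₀) with hρdef
  have hρ : 0 < ρ := lt_min hρ₁ (lt_min (by linarith) hy₀)
  obtain ⟨w, hw_mem, hw_dist⟩ := Metric.mem_closure_iff.1 hmem ρ hρ
  obtain ⟨x, hx_set, rfl⟩ := hw_mem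
  have hxt : dist ((x : ℂ)) ((t : ℂ)) < ρ := by rw [dist_comm]; exact hw_dist
  -- the imaginary part is small
  have hy : x.im < ρ := by
    have h1 : x.im = ((x : ℂ) - (t : ℂ)).im := by simp [UpperHalfPlane.coe_im]
    have h2 : |((x : ℂ) - (t : ℂ)).im| ≤ ‖(x : ℂ) - (t : ℂ)‖ :=
      Complex.abs_im_le_norm _
    have h3 : ‖(x : ℂ) - (t : ℂ)‖ < ρ := by
      rw [← Complex.dist_eq]; exact hxt
    calc x.im ≤ |((x : ℂ) - (t : ℂ)).im| := by rw [← h1]; exact le_abs_self _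
    _ ≤ _ := h2
    _ < ρ := h3
  have hya : x.im < a / 2 := lt_of_lt_of_le hy (le_trans (min_le_right _ _) (min_le_left _ _))
  have hyy₀ : x.im < y₀ := lt_of_lt_of_le hy (le_trans (min_le_right _ _) (min_le_right _ _))
  -- lower bound on |x - a i|
  have hr₁ : a / 2 ≤ ‖(x : ℂ) - a * Complex.I‖ := by
    have h1 : ((x : ℂ) - a * Complex.I).im = x.im - a := by simp [UpperHalfPlane.coe_im]
    have h2 : |((x : ℂ) - a * Complex.I).im| ≤ ‖(x : ℂ) - a * Complex.I‖ :=
      Complex.abs_im_le_norm _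
    have h3 : a / 2 ≤ |x.im - a| := by
      rw [abs_sub_comm, abs_of_pos (by linarith)]
      linarith
    rw [h1] at h2
    linarith
  -- the distance to a·i is at least M
  have hsqrt_le : Real.sqrt (a * x.im) ≤ a / (4 * C) := by
    have he : a * y₀ = (a / (4 * C)) ^ 2 := by
      rw [hy₀def]; field_simp; ring
    have h1 : Real.sqrt (a * x.im) ≤ Real.sqrt (a * y₀) := by
      apply Real.sqrt_le_sqrt; nlinarith
    rw [he, Real.sqrt_sq (by positivity)] at h1
    exact h1
  have hMd : M ≤ dist x (ptI a ha) := by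
    apply le_dist ha x M
    have hs0 : (0:ℝ) ≤ Real.sqrt (a * x.im) := Real.sqrt_nonneg _
    have hsinh_pos : 0 < Real.sinh (M / 2) := Real.sinh_pos_iff.2 (by linarith)
    calc Real.sinh (M / 2) * (2 * Real.sqrt (a * x.im))
        ≤ C * (2 * (a / (4 * C))) := by
          apply mul_le_mul hsC (by linarith) (by linarith) hC.le
    _ = a / 2 := by field_simp; ring
    _ ≤ _ := hr₁
  -- lower bound on the distance difference
  have hQx : κ < QQ a b ((x : ℂ)) := by
    have h1 : dist ((x : ℂ)) ((t : ℂ)) < ρ₁ := lt_of_lt_of_le hxt (min_le_left _ _)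
    have h2 := hball h1
    have h3 : |QQ a b ((x : ℂ)) - QQ a b ((t : ℂ))| < QQ a b ((t : ℂ)) - κ := by
      rw [← Real.dist_eq]; exact h2
    have h4 := abs_lt.1 h3
    linarith [h4.1]
  have hg : m ≤ dist x (ptI a ha) - dist x (ptI b hb) := by
    rw [dist_sub_dist ha hb, hmdef]
    exact Real.log_le_log (by linarith) hQx.le
  -- conclude
  have hd2 : (0:ℝ) ≤ dist x (ptI b hb) := dist_nonneg
  have hd1 : (0:ℝ) ≤ dist x (ptI a ha) := dist_nonneg
  have hmm : m * M = |k| + 1 := by rw [hMdef]; field_simp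
  have hfk : dist x (ptI a ha) ^ 2 - dist x (ptI b hb) ^ 2 = k := hx_set
  nlinarith [le_abs_self k, mul_le_mul hg (le_refl (dist x (ptI a ha) + dist x (ptI b hb)))
      (by linarith) (by linarith : (0:ℝ) ≤ dist x (ptI a ha) - dist x (ptI b hb)),
    mul_le_mul_of_nonneg_left hMd hm.le]

open Filter Topology in
lemma mem_closure_pt {a b : ℝ} (ha : 0 < a) (hab : a < b) (k t : ℝ) (ht : t ^ 2 = a * b) :
    (t : ℂ) ∈ closure ((fun x : UpperHalfPlane => (x : ℂ)) ''
      {x : UpperHalfPlane | dist x (ptI a ha) ^ 2 - dist x (ptI b (ha.trans hab)) ^ 2 = k}) := by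
  have hb : 0 < b := ha.trans hab
  have hab0 : 0 < a * b := mul_pos ha hb
  have ht0 : t ≠ 0 := by
    intro h
    rw [h] at ht
    simp at ht
    rcases ht with h' | h' <;> linarith
  have htabs : 0 < |t| := abs_pos.2 ht0
  rw [Metric.mem_closure_iff]
  intro ε hε
  set δ : ℝ := min (ε / 4) (|t| / 2) with hδdef
  have hδ : 0 < δ := lt_min (by linarith) (by linarith)
  have hδt : δ ≤ |t| / 2 := min_le_right _ _
  have hδε : δ ≤ ε / 4 := min_le_left _ _
  set s : ℝ := if 0 < t then 1 else -1 with hsdef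
  have hst : s * t = |t| := by
    by_cases h : 0 < t
    · simp [hsdef, h, abs_of_pos h]
    · push_neg at h
      simp [hsdef, not_lt.2 h, abs_of_nonpos h]
  have hs1 : s ^ 2 = 1 := by
    by_cases h : 0 < t <;> simp [hsdef, h]
  set up : ℝ := t + s * δ with hupdef
  set um : ℝ := t - s * δ with humdef
  have hup2 : a * b < up ^ 2 := by
    have : up ^ 2 = t ^ 2 + 2 * δ * (s * t) + s ^ 2 * δ ^ 2 := by rw [hupdef]; ring
    rw [this, hst, hs1, ht]
    nlinarith
  have hum2 : um ^ 2 < a * b := by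
    have : um ^ 2 = t ^ 2 - 2 * δ * (s * t) + s ^ 2 * δ ^ 2 := by rw [humdef]; ring
    rw [this, hst, hs1, ht]
    nlinarith
  have hum_sq : um ^ 2 = (|t| - δ) ^ 2 := by
    have : um ^ 2 = t ^ 2 - 2 * δ * (s * t) + s ^ 2 * δ ^ 2 := by rw [humdef]; ring
    rw [this, hst, hs1, ← sq_abs t]
    ring
  have hum0 : um ≠ 0 := by
    intro h
    rw [h] at hum_sq
    nlinarith
  have hup0 : up ≠ 0 := by
    intro h
    rw [h] at hup2
    simp at hup2
    nlinarith
  have hQup : 1 < QQ a b (up : ℂ) := by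
    rw [QQ_real ha hb, lt_div_iff₀ (by positivity)]
    nlinarith
  have hQum : QQ a b (um : ℂ) < 1 := by
    rw [QQ_real ha hb, div_lt_one (by positivity)]
    nlinarith
  have h1 := (FF_tendsto_atTop ha hb hup0 hQup).eventually_gt_atTop k
  have h2 := (FF_tendsto_atBot ha hb hum0 hQum).eventually_lt_atBot k
  have h5 : Set.Ioo (0:ℝ) (ε / 2) ∈ 𝓝[>] (0:ℝ) :=
    Ioo_mem_nhdsGT_of_mem ⟨le_refl _, by linarith⟩
  obtain ⟨h, hk_up, hk_um, hh_mem⟩ := (h1.and (h2.and (eventually_of_mem h5 fun _ hx => hx))).exists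
  obtain ⟨hh0, hhε⟩ := hh_mem
  -- continuity of the slice
  have hψc : Continuous fun u : ℝ => FF a b ((u : ℂ) + h * Complex.I) := by
    have hpath : Continuous fun u : ℝ => (u : ℂ) + h * Complex.I :=
      (Complex.continuous_ofReal).add continuous_const
    have hlog : Continuous fun u : ℝ => Real.log (QQ a b ((u : ℂ) + h * Complex.I)) := by
      apply Continuous.log ((QQ_continuous ha hb).comp hpath)
      intro u
      exact (QQ_pos ha hb _).ne'
    have hdA : ∀ c : ℝ, 0 < c → Continuous fun u : ℝ => dA c ((u : ℂ) + h * Complex.I) := by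
      intro c hc
      have heq : (fun u : ℝ => dA c ((u : ℂ) + h * Complex.I))
          = fun u : ℝ => 2 * Real.arsinh
              (‖(u : ℂ) + h * Complex.I - c * Complex.I‖ / (2 * Real.sqrt (c * h))) := by
        funext u
        rw [dA]
        congr 2
        simp
      rw [heq]
      apply continuous_const.mul
      apply Real.continuous_arsinh.comp
      apply Continuous.div_const
      exact continuous_norm.comp ((hpath).sub continuous_const)
    simp only [FF]
    exact hlog.mul ((hdA a ha).add (hdA b hb))
  -- IVT
  have hk_mem : k ∈ Set.uIcc (FF a b ((um : ℂ) + h * Complex.I)) (FF a b ((up : ℂ) + h * Complex.I)) :=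
    Set.mem_uIcc.2 (Or.inl ⟨hk_um.le, hk_up.le⟩)
  obtain ⟨u, hu_mem, hu_eq⟩ := intermediate_value_uIcc (hψc.continuousOn) hk_mem
  -- the point
  have him : ((u : ℂ) + h * Complex.I).im = h := by simp
  refine ⟨((u : ℂ) + h * Complex.I), ⟨⟨(u : ℂ) + h * Complex.I, by rw [him]; exact hh0⟩, ?_, rfl⟩, ?_⟩
  · show dist _ (ptI a ha) ^ 2 - dist _ (ptI b hb) ^ 2 = k
    rw [FF_eq ha hb]
    exact hu_eq
  · -- distance estimate
    have hut : |u - t| ≤ δ := by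
      have hs_cases : s = 1 ∨ s = -1 := by
        by_cases hpos : 0 < t
        · left; simp [hsdef, hpos]
        · right; simp [hsdef, hpos]
      have hsub : Set.uIcc um up ⊆ Set.Icc (t - δ) (t + δ) := by
        apply Set.uIcc_subset_Icc <;> simp only [Set.mem_Icc, humdef, hupdef] <;>
          rcases hs_cases with h' | h' <;> simp only [h'] <;> constructor <;> linarith
      have := hsub hu_mem
      rw [Set.mem_Icc] at this
      rw [abs_le]
      constructor <;> linarith [this.1, this.2]
    have habs : ‖(t : ℂ) - ((u : ℂ) + h * Complex.I)‖ ≤ |t - u| + |h| := by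
      calc ‖(t : ℂ) - ((u : ℂ) + h * Complex.I)‖
          ≤ |((t : ℂ) - ((u : ℂ) + h * Complex.I)).re| + |((t : ℂ) - ((u : ℂ) + h * Complex.I)).im| :=
            Complex.norm_le_abs_re_add_abs_im _
      _ = |t - u| + |h| := by simp
    rw [Complex.dist_eq]
    have : |t - u| ≤ δ := by rw [abs_sub_comm]; exact hut
    calc ‖(t : ℂ) - ((u : ℂ) + h * Complex.I)‖ ≤ |t - u| + |h| := habs
    _ ≤ δ + ε / 2 := by
        apply add_le_add this
        rw [abs_of_pos hh0]
        linarith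
    _ < ε := by linarith

end SqHyp

/-- The ideal endpoints of every square hyperbola `S_k(aI, bI)` are `±√(ab)`, the
endpoints of the equidistant line `S_0(aI, bI)`: the intersection of the closure in `ℂ`
of `S_k(aI,bI)` with the real axis is `{−√(ab), √(ab)}`. -/
theorem squareHyperbola_endpoints (a b : ℝ) (ha : 0 < a) (hab : a < b) (k : ℝ) :
    closure ((fun x : UpperHalfPlane => (x : ℂ)) ''
        {x : UpperHalfPlane |
          dist x (ptI a ha) ^ 2 - dist x (ptI b (ha.trans hab)) ^ 2 = k})
      ∩ {z : ℂ | z.im = 0}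
    = {(-(Real.sqrt (a * b)) : ℂ), ((Real.sqrt (a * b) : ℝ) : ℂ)} := by
  have hb : 0 < b := ha.trans hab
  have hab0 : 0 < a * b := mul_pos ha hb
  have hsq : Real.sqrt (a * b) ^ 2 = a * b := Real.sq_sqrt hab0.le
  ext z
  simp only [Set.mem_inter_iff, Set.mem_setOf_eq, Set.mem_insert_iff, Set.mem_singleton_iff]
  constructor
  · rintro ⟨hcl, him⟩
    have hz : z = ((z.re : ℝ) : ℂ) := Complex.ext (by simp) (by simp [him])
    set t := z.re with htdef
    rw [hz] at hcl ⊢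
    rcases lt_trichotomy (t ^ 2) (a * b) with hlt | heq | hgt
    · exfalso
      have hinner : {x : UpperHalfPlane | dist x (ptI a ha) ^ 2 - dist x (ptI b (ha.trans hab)) ^ 2 = k}
          = {x : UpperHalfPlane | dist x (ptI b hb) ^ 2 - dist x (ptI a ha) ^ 2 = -k} := by
        ext x
        simp only [Set.mem_setOf_eq]
        constructor <;> intro h <;> linarith
      rw [hinner] at hcl
      exact SqHyp.not_mem_closure hb ha (-k) t (by nlinarith) hcl
    · have habs : |t| = Real.sqrt (a * b) := by
        rw [← Real.sqrt_sq_eq_abs, heq]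
      rcases (abs_eq (Real.sqrt_nonneg (a * b))).1 habs with h | h
      · right
        rw [h]
      · left
        rw [h]
        push_cast
        ring
    · exact absurd hcl (SqHyp.not_mem_closure ha hb k t (by nlinarith))
  · intro hz
    rcases hz with h | h
    · subst h
      refine ⟨?_, by simp⟩
      have hmem := SqHyp.mem_closure_pt ha hab k (-(Real.sqrt (a * b)))
        (by rw [neg_sq]; exact hsq)
      rw [show (-((Real.sqrt (a * b) : ℝ)) : ℂ) = ((-(Real.sqrt (a * b)) : ℝ) : ℂ) by push_cast; ring]
      exact hmem
    · subst h
      refine ⟨SqHyp.mem_closure_pt ha hab k (Real.sqrt (a * b)) hsq, by simp⟩
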